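/- Let G be a graph whose vertex set is partitioned into sets R and B, let n = |R| + |B|, and let k ≥ 1 be an integer with |R| ≥ k and n ≥ k + 2. Let G' be the domination-reduction graph of (G, R, B, k). Then there exists a set W ⊆ R with |W| ≤ k such that every vertex of B has a neighbor in W if and only if G' contains a path P with |V(P)| ≤ 2k + 1 and |N_{G'}(V(P))| ≥ (k+1)·n² + n − k. -/

import Mathlib

open SimpleGraph

def openNbhd {V : Type*} (G : SimpleGraph V) (S : Set V) : Set V :=
  {v | v ∉ S ∧ ∃ w ∈ S, G.Adj v w}

def domRed {V : Type*} [Fintype V] (G : SimpleGraph V) (R : Set V) (k : ℕ) :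
    SimpleGraph (V ⊕ (Fin (k + 1) ⊕ (Fin (k + 1) × Fin ((Fintype.card V) ^ 2)))) :=
  SimpleGraph.fromRel (fun a b =>
    match a, b with
    | Sum.inl v, Sum.inl w => G.Adj v w
    | Sum.inl v, Sum.inr (Sum.inl _) => v ∈ R
    | Sum.inr (Sum.inl i), Sum.inr (Sum.inr (i', _)) => i = i'
    | _, _ => False)

/-! ### Generic list lemmas -/

theorem listC {α : Type*} (r : α → α → Prop) (p : α → Bool)
    (hr : ∀ a b, r a b → ¬(p a = true ∧ p b = true)) :
    ∀ l : List α, l.Chain' r → 2 * l.countP p ≤ l.length + 1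
  | [], _ => by simp
  | [a], _ => by by_cases h : p a <;> simp [List.countP_cons, h]
  | a :: b :: t, hch => by
      have hch' : (b :: t).Chain' r := hch.tail
      have hab : r a b := (List.isChain_cons_cons.mp hch).1
      by_cases ha : p a
      · have hb : ¬ p b = true := fun hb => hr a b hab ⟨ha, hb⟩
        have IH2 := listC r p hr t hch'.tail
        simp [List.countP_cons, ha, hb] at *
        omega
      · have IH := listC r p hr (b :: t) hch'
        simp [List.countP_cons, ha] at *
        omega

theorem listM {α : Type*} (r : α → α → Prop) (p : α → Bool)
    (hr : ∀ a b, r a b → ¬(p a = true ∧ p b = true)) :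
    ∀ (m : ℕ) (l : List α), l.Chain' r → l.Nodup → l.length ≤ 2*m+1 → m+1 ≤ l.countP p →
      ∀ x ∈ l, ¬ p x = true → ∃ a ∈ l, ∃ b ∈ l, p a ∧ p b ∧ a ≠ b ∧
        (r a x ∨ r x a) ∧ (r b x ∨ r x b) := by
  intro m
  induction m with
  | zero =>
      intro l hch hnd hlen hcnt x hx hpx
      match l, hlen with
      | [], _ => simp at hcnt
      | [a], _ =>
          rcases List.mem_singleton.mp hx with rfl
          simp [List.countP_cons, hpx] at hcnt
  | succ m IH =>
      intro l hch hnd hlen hcnt x hx hpx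
      match l with
      | [] => simp at hcnt
      | [a] =>
          by_cases h : p a <;> simp [List.countP_cons, h] at hcnt
      | a :: b :: t =>
          have hch' : (b :: t).Chain' r := hch.tail
          have hab : r a b := (List.isChain_cons_cons.mp hch).1
          have ha : p a = true := by
            by_contra ha
            have hC := listC r p hr (b :: t) hch'
            simp [List.countP_cons, ha] at hcnt hlen hC
            omega
          have hb : ¬ p b = true := fun hb => hr a b hab ⟨ha, hb⟩
          match t with
          | [] =>
              simp [List.countP_cons, ha, hb] at hcnt
          | c :: t' =>
              have hbc : r b c := (List.isChain_cons_cons.mp hch').1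
              have hc : p c = true := by
                by_contra hc
                have hC := listC r p hr t' hch'.tail.tail
                simp [List.countP_cons, ha, hb, hc] at hcnt hlen hC
                omega
              have hcnt' : m + 1 ≤ (c :: t').countP p := by
                simp [List.countP_cons, ha, hb, hc] at hcnt ⊢
                omega
              have hlen' : (c :: t').length ≤ 2*m+1 := by
                simp only [List.length_cons] at hlen ⊢
                omega
              simp only [List.mem_cons] at hx
              rcases hx with rfl | rfl | hx
              · exact absurd ha hpx
              · refine ⟨a, by simp, c, by simp, ha, hc, ?_, Or.inl hab, Or.inr hbc⟩
                intro h
                exact (List.nodup_cons.mp hnd).1 (h ▸ by simp)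
              · obtain ⟨a', ha', b', hb', h1, h2, h3, h4, h5⟩ :=
                  IH (c :: t') hch'.tail hnd.of_cons.of_cons hlen' hcnt' x
                    (List.mem_cons.mpr hx) hpx
                exact ⟨a', by simp [ha'], b', by simp [hb'], h1, h2, h3, h4, h5⟩

/-! ### Cardinality helpers -/

lemma ncard_setOf_mem_list {α : Type*} (l : List α) (h : l.Nodup) :
    {x | x ∈ l}.ncard = l.length := by
  classical
  rw [show {x | x ∈ l} = ↑l.toFinset by ext; simp, Set.ncard_coe_finset]
  exact List.toFinset_card_of_nodup h

lemma ncard_range_inj {α β : Type*} [Fintype α] (f : α → β) (hf : Function.Injective f) :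
    (Set.range f).ncard = Fintype.card α := by
  rw [← Set.image_univ, Set.ncard_image_of_injective _ hf, Set.ncard_univ,
    Nat.card_eq_fintype_card]

/-! ### Adjacency in the reduction graph -/

section DR
variable {V : Type*} [Fintype V] (G : SimpleGraph V) (R : Set V) (k : ℕ)

lemma adj_inl_inl {v w : V} :
    (domRed G R k).Adj (Sum.inl v) (Sum.inl w) ↔ G.Adj v w := by
  constructor
  · rintro ⟨hne, h | h⟩
    · exact h
    · exact h.symm
  · intro h
    exact ⟨by simp [h.ne], Or.inl h⟩

lemma adj_inl_hub {v : V} {i : Fin (k+1)} :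
    (domRed G R k).Adj (Sum.inl v) (Sum.inr (Sum.inl i)) ↔ v ∈ R := by
  constructor
  · rintro ⟨hne, h | h⟩
    · exact h
    · exact h.elim
  · intro h
    exact ⟨by simp, Or.inl h⟩

lemma adj_hub_leaf {i i' : Fin (k+1)} {j : Fin ((Fintype.card V)^2)} :
    (domRed G R k).Adj (Sum.inr (Sum.inl i)) (Sum.inr (Sum.inr (i', j))) ↔ i = i' := by
  constructor
  · rintro ⟨hne, h | h⟩
    · exact h
    · exact h.elim
  · intro h
    exact ⟨by simp, Or.inl h⟩

lemma not_adj_hub_hub {i i' : Fin (k+1)} :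
    ¬ (domRed G R k).Adj (Sum.inr (Sum.inl i)) (Sum.inr (Sum.inl i')) := by
  rintro ⟨hne, h | h⟩ <;> exact h

lemma not_adj_inl_leaf {v : V} {i : Fin (k+1)} {j : Fin ((Fintype.card V)^2)} :
    ¬ (domRed G R k).Adj (Sum.inl v) (Sum.inr (Sum.inr (i, j))) := by
  rintro ⟨hne, h | h⟩ <;> exact h

lemma not_adj_leaf_leaf {a b : Fin (k+1) × Fin ((Fintype.card V)^2)} :
    ¬ (domRed G R k).Adj (Sum.inr (Sum.inr a)) (Sum.inr (Sum.inr b)) := by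
  rintro ⟨hne, h | h⟩ <;> exact h

lemma adj_leaf_eq {x : V ⊕ (Fin (k + 1) ⊕ (Fin (k + 1) × Fin ((Fintype.card V) ^ 2)))}
    {i : Fin (k+1)} {j : Fin ((Fintype.card V)^2)}
    (h : (domRed G R k).Adj x (Sum.inr (Sum.inr (i, j)))) : x = Sum.inr (Sum.inl i) := by
  match x with
  | Sum.inl v => exact absurd h (not_adj_inl_leaf G R k)
  | Sum.inr (Sum.inl i') =>
      obtain ⟨-, h | h⟩ := h
      · exact congrArg (fun t => Sum.inr (Sum.inl t)) h
      · exact h.elim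
  | Sum.inr (Sum.inr a) => exact absurd h (not_adj_leaf_leaf G R k)

/-! ### The explicit path for the forward direction -/

def chainWalk : ∀ (l : List V), (∀ v ∈ l, v ∈ R) → (h : l.length ≤ k) →
    (domRed G R k).Walk (Sum.inr (Sum.inl ⟨l.length, Nat.lt_succ_of_le h⟩))
      (Sum.inr (Sum.inl ⟨0, Nat.succ_pos k⟩))
  | [], _, _ => Walk.nil
  | v :: t, hl, h =>
      Walk.cons (((adj_inl_hub G R k).mpr (hl v (List.mem_cons_self))).symm)
        (Walk.cons ((adj_inl_hub G R k (i := ⟨t.length, by simp at h; omega⟩)).mpr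
            (hl v (List.mem_cons_self)))
          (chainWalk t (fun w hw => hl w (List.mem_cons_of_mem v hw)) (by simp at h; omega)))

lemma chainWalk_support_length : ∀ (l : List V) (hl : ∀ v ∈ l, v ∈ R) (h : l.length ≤ k),
    (chainWalk G R k l hl h).support.length = 2*l.length+1 := by
  intro l
  induction l with
  | nil => intro hl h; simp [chainWalk]
  | cons v t IH => intro hl h; rw [chainWalk, Walk.support_cons, Walk.support_cons, List.length_cons,
      List.length_cons, IH, List.length_cons]; omega

lemma mem_chainWalk_support : ∀ (l : List V) (hl : ∀ v ∈ l, v ∈ R) (h : l.length ≤ k)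
    (x : V ⊕ (Fin (k + 1) ⊕ (Fin (k + 1) × Fin ((Fintype.card V) ^ 2)))),
    x ∈ (chainWalk G R k l hl h).support ↔
      (∃ i : Fin (k+1), i.1 ≤ l.length ∧ x = Sum.inr (Sum.inl i)) ∨ ∃ v ∈ l, x = Sum.inl v := by
  intro l
  induction l with
  | nil =>
      intro hl h x
      simp only [chainWalk, Walk.support_nil, List.mem_singleton, List.length_nil]
      constructor
      · rintro rfl; exact Or.inl ⟨⟨0, Nat.succ_pos k⟩, by simp⟩
      · rintro (⟨i, hi, rfl⟩ | ⟨v, hv, rfl⟩)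
        · congr 2; exact Fin.ext (by show (i:ℕ) = 0; have : (i:ℕ) ≤ 0 := (by simpa using hi); omega)
        · simp at hv
  | cons v t IH =>
      intro hl h x
      simp only [chainWalk, Walk.support_cons, List.mem_cons, IH, List.length_cons]
      constructor
      · rintro (rfl | rfl | ⟨i, hi, rfl⟩ | ⟨w, hw, rfl⟩)
        · exact Or.inl ⟨_, by simp, rfl⟩
        · exact Or.inr ⟨v, by simp, rfl⟩
        · exact Or.inl ⟨i, by omega, rfl⟩
        · exact Or.inr ⟨w, by simp [hw], rfl⟩
      · rintro (⟨i, hi, rfl⟩ | ⟨w, hw, rfl⟩)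
        · rcases Nat.lt_or_ge i.1 (t.length + 1) with h' | h'
          · exact Or.inr (Or.inr (Or.inl ⟨i, by omega, rfl⟩))
          · left; congr 2; exact Fin.ext (by simp; omega)
        · rcases hw with rfl | hw'
          · exact Or.inr (Or.inl rfl)
          · exact Or.inr (Or.inr (Or.inr ⟨w, hw', rfl⟩))

lemma chainWalk_isPath : ∀ (l : List V) (hl : ∀ v ∈ l, v ∈ R) (h : l.length ≤ k),
    l.Nodup → (chainWalk G R k l hl h).IsPath := by
  intro l
  induction l with
  | nil => intro hl h _; simp [chainWalk]
  | cons v t IH =>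
      intro hl h hnd
      rw [List.nodup_cons] at hnd
      simp only [chainWalk, Walk.cons_isPath_iff]
      refine ⟨⟨IH _ _ hnd.2, ?_⟩, ?_⟩
      · rw [mem_chainWalk_support]
        rintro (⟨i, hi, h'⟩ | ⟨w, hw, h'⟩)
        · simp at h'
        · exact hnd.1 ((Sum.inl.injEq _ _ ▸ h') ▸ hw)
      · simp only [Walk.support_cons, List.mem_cons, mem_chainWalk_support]
        rintro (h' | ⟨i, hi, h'⟩ | ⟨w, hw, h'⟩)
        · simp at h'
        · have hv := congrArg (fun x => match x with
            | Sum.inr (Sum.inl i) => i.1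
            | _ => 0) h'
          simp at hv
          omega
        · simp at h'

end DR

def isHub {V : Type*} {k n : ℕ} : (V ⊕ (Fin (k+1) ⊕ (Fin (k+1) × Fin n))) → Bool
  | Sum.inr (Sum.inl _) => true
  | _ => false

lemma isHub_iff {V : Type*} {k n : ℕ} {x : V ⊕ (Fin (k+1) ⊕ (Fin (k+1) × Fin n))} :
    isHub x = true ↔ ∃ i, x = Sum.inr (Sum.inl i) := by
  match x with
  | Sum.inl v => simp [isHub]
  | Sum.inr (Sum.inl i) => simp [isHub]
  | Sum.inr (Sum.inr a) => simp [isHub]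

/-! ### The main theorem -/

/-- For a graph `G` with vertex set partitioned into `R` and `B`, `n = |R| + |B|`,
`k ≥ 1`, `|R| ≥ k` and `n ≥ k + 2`: there is `W ⊆ R` with `|W| ≤ k` dominating all of
`B` iff the domination-reduction graph `G'` contains a path `P` with `|V(P)| ≤ 2k + 1`
and `|N_{G'}(V(P))| ≥ (k+1)·n² + n − k`. -/
theorem stmt_17 {V : Type*} [Fintype V] (G : SimpleGraph V) (R B : Set V)
    (hRB : R ∩ B = ∅) (hRBu : R ∪ B = Set.univ) (k : ℕ) (hk : 1 ≤ k)
    (hR : k ≤ R.ncard) (hn : k + 2 ≤ Fintype.card V) :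
    (∃ W : Set V, W ⊆ R ∧ W.ncard ≤ k ∧ ∀ b ∈ B, ∃ w ∈ W, G.Adj b w) ↔
      ∃ (u v : V ⊕ (Fin (k + 1) ⊕ (Fin (k + 1) × Fin ((Fintype.card V) ^ 2))))
        (p : (domRed G R k).Walk u v), p.IsPath ∧
        p.support.length ≤ 2 * k + 1 ∧
        (k + 1) * (Fintype.card V) ^ 2 + Fintype.card V - k ≤
          (openNbhd (domRed G R k) {x | x ∈ p.support}).ncard := by
  classical
  set n := Fintype.card V with hndef
  have hkn : k ≤ n := by omega
  constructor
  · -- forward direction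
    rintro ⟨W, hWR, hWk, hWdom⟩
    obtain ⟨W', hWW', hW'R, hW'k⟩ := Set.exists_subsuperset_card_eq hWR hWk hR
    have hW'fin : W'.Finite := Set.toFinite _
    set l := hW'fin.toFinset.toList with hldef
    have hlnd : l.Nodup := Finset.nodup_toList _
    have hlmem : ∀ v : V, v ∈ l ↔ v ∈ W' := by
      intro v
      rw [hldef, Finset.mem_toList, Set.Finite.mem_toFinset]
    have hllen : l.length = k := by
      rw [hldef, Finset.length_toList, ← Set.ncard_eq_toFinset_card _ hW'fin, hW'k]
    have hlR : ∀ v ∈ l, v ∈ R := fun v hv => hW'R ((hlmem v).mp hv)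
    have hlk : l.length ≤ k := le_of_eq hllen
    refine ⟨_, _, chainWalk G R k l hlR hlk, chainWalk_isPath G R k l hlR hlk hlnd, ?_, ?_⟩
    · rw [chainWalk_support_length]; omega
    · -- neighborhood bound
      set p := chainWalk G R k l hlR hlk with hpdef
      set S : Set (V ⊕ (Fin (k + 1) ⊕ (Fin (k + 1) × Fin (n ^ 2)))) :=
        {x | x ∈ p.support} with hSdef
      set T : Set (V ⊕ (Fin (k + 1) ⊕ (Fin (k + 1) × Fin (n ^ 2)))) :=
        (Set.range fun a : Fin (k+1) × Fin (n^2) => (Sum.inr (Sum.inr a))) ∪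
          (Sum.inl '' (Set.univ \ {v | v ∈ l})) with hTdef
      have hTsub : T ⊆ openNbhd (domRed G R k) S := by
        rintro x (⟨⟨i, j⟩, rfl⟩ | ⟨v, ⟨-, hv⟩, rfl⟩)
        · refine ⟨?_, Sum.inr (Sum.inl i), ?_, ((adj_hub_leaf G R k).mpr rfl).symm⟩
          · intro hx
            rw [hSdef, Set.mem_setOf_eq, mem_chainWalk_support] at hx
            rcases hx with ⟨i', hi', h'⟩ | ⟨v, hv, h'⟩ <;> simp at h'
          · rw [hSdef, Set.mem_setOf_eq, mem_chainWalk_support]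
            exact Or.inl ⟨i, by omega, rfl⟩
        · have hvl : v ∉ l := hv
          refine ⟨?_, ?_⟩
          · intro hx
            rw [hSdef, Set.mem_setOf_eq, mem_chainWalk_support] at hx
            rcases hx with ⟨i', hi', h'⟩ | ⟨w, hw, h'⟩
            · simp at h'
            · exact hvl ((Sum.inl.injEq _ _ ▸ h') ▸ hw)
          · have hvRB : v ∈ R ∪ B := hRBu.symm ▸ Set.mem_univ v
            rcases hvRB with hvR | hvB
            · refine ⟨Sum.inr (Sum.inl ⟨0, Nat.succ_pos k⟩), ?_, (adj_inl_hub G R k).mpr hvR⟩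
              rw [hSdef, Set.mem_setOf_eq, mem_chainWalk_support]
              exact Or.inl ⟨_, by simp, rfl⟩
            · obtain ⟨w, hwW, hadj⟩ := hWdom v hvB
              refine ⟨Sum.inl w, ?_, (adj_inl_inl G R k).mpr hadj⟩
              rw [hSdef, Set.mem_setOf_eq, mem_chainWalk_support]
              exact Or.inr ⟨w, (hlmem w).mpr (hWW' hwW), rfl⟩
      have hTcard : T.ncard = (k+1)*n^2 + (n - k) := by
        rw [hTdef, Set.ncard_union_eq ?_ (Set.toFinite _) (Set.toFinite _)]
        · congr 1
          · rw [ncard_range_inj _ (fun a b h => by simpa using h), Fintype.card_prod,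
              Fintype.card_fin, Fintype.card_fin]
          · rw [Set.ncard_image_of_injective _ Sum.inl_injective,
              Set.ncard_diff (Set.subset_univ _) (Set.toFinite _), Set.ncard_univ,
              Nat.card_eq_fintype_card, ncard_setOf_mem_list l hlnd, hllen]
        · rw [Set.disjoint_left]
          rintro x ⟨a, rfl⟩ ⟨v, -, h⟩
          simp at h
      have hfin := Set.ncard_le_ncard hTsub (Set.toFinite _)
      rw [hTcard] at hfin
      have hkn' : k ≤ n := hkn
      generalize (k+1)*n^2 = C at hfin ⊢
      omega
  · -- backward direction
    rintro ⟨u, v, p, hpath, hlen, hcard⟩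
    set S : Set (V ⊕ (Fin (k + 1) ⊕ (Fin (k + 1) × Fin (n ^ 2)))) :=
      {x | x ∈ p.support} with hSdef
    have hScard : S.ncard = p.support.length := ncard_setOf_mem_list _ hpath.support_nodup
    have hNX : Nat.card (V ⊕ (Fin (k + 1) ⊕ (Fin (k + 1) × Fin (n ^ 2)))) =
        n + ((k+1) + (k+1)*n^2) := by
      rw [Nat.card_eq_fintype_card]
      simp only [Fintype.card_sum, Fintype.card_prod, Fintype.card_fin]
      rfl
    have hq : 2*k+2 ≤ n^2 := by
      have h1 : (k+2)*(k+2) ≤ n*n := Nat.mul_le_mul hn hn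
      have h2 : n*n = n^2 := (sq n).symm
      nlinarith
    have hqC : n^2 ≤ (k+1)*n^2 := Nat.le_mul_of_pos_left _ k.succ_pos
    -- Step A: every hub lies on the path
    have hhub : ∀ i : Fin (k+1), Sum.inr (Sum.inl i) ∈ p.support := by
      intro i
      by_contra hi
      have hdisj : Disjoint (openNbhd (domRed G R k) S)
          (Set.range (fun j : Fin (n^2) =>
            (Sum.inr (Sum.inr (i, j)) : V ⊕ (Fin (k + 1) ⊕ (Fin (k + 1) × Fin (n ^ 2)))))) := by
        rw [Set.disjoint_right]
        rintro x ⟨j, rfl⟩ hmem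
        obtain ⟨hnot, w, hwS, hadj⟩ := hmem
        have hw := adj_leaf_eq G R k hadj.symm
        rw [hw] at hwS
        exact hi hwS
      have hcardLi : (Set.range (fun j : Fin (n^2) =>
          (Sum.inr (Sum.inr (i, j)) : V ⊕ (Fin (k + 1) ⊕ (Fin (k + 1) × Fin (n ^ 2)))))).ncard
          = n^2 := by
        rw [ncard_range_inj _ (fun a b h => by simpa using h), Fintype.card_fin]
      have hle : (openNbhd (domRed G R k) S).ncard + (Set.range (fun j : Fin (n^2) =>
          (Sum.inr (Sum.inr (i, j)) : V ⊕ (Fin (k + 1) ⊕ (Fin (k + 1) × Fin (n ^ 2)))))).ncard ≤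
          Nat.card (V ⊕ (Fin (k + 1) ⊕ (Fin (k + 1) × Fin (n ^ 2)))) := by
        rw [← Set.ncard_union_eq hdisj (Set.toFinite _) (Set.toFinite _), ← Set.ncard_univ]
        exact Set.ncard_le_ncard (Set.subset_univ _) (Set.toFinite _)
      rw [hcardLi, hNX] at hle
      generalize (k+1)*n^2 = C at hle hcard hqC
      omega
    -- hubs are pairwise non-adjacent
    have hr : ∀ a b, (domRed G R k).Adj a b → ¬(isHub a = true ∧ isHub b = true) := by
      rintro a b hadj ⟨ha, hb⟩
      obtain ⟨i, rfl⟩ := isHub_iff.mp ha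
      obtain ⟨i', rfl⟩ := isHub_iff.mp hb
      exact not_adj_hub_hub G R k hadj
    have hchain := p.isChain_adj_support
    have hnd := hpath.support_nodup
    -- at least k+1 hubs on the path
    have hcnt : k+1 ≤ p.support.countP isHub := by
      have himg : ((Finset.univ : Finset (Fin (k+1))).image
          fun i => (Sum.inr (Sum.inl i) : V ⊕ (Fin (k + 1) ⊕ (Fin (k + 1) × Fin (n ^ 2))))) ⊆
          (p.support.filter isHub).toFinset := by
        intro x hx
        simp only [Finset.mem_image, Finset.mem_univ, true_and] at hx
        obtain ⟨i, rfl⟩ := hx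
        rw [List.mem_toFinset, List.mem_filter]
        exact ⟨hhub i, rfl⟩
      have h1 := Finset.card_le_card himg
      rw [Finset.card_image_of_injective _ (fun a b h => by simpa using h),
        Finset.card_univ, Fintype.card_fin] at h1
      calc k+1 ≤ (p.support.filter isHub).toFinset.card := h1
        _ ≤ (p.support.filter isHub).length := (p.support.filter isHub).toFinset_card_le
        _ = p.support.countP isHub := List.countP_eq_length_filter.symm
    -- structure: every non-hub on the path is an R-vertex
    have hM := listM _ isHub hr k p.support hchain hnd hlen hcnt
    have hclass : ∀ x ∈ p.support, (∃ i : Fin (k+1), x = Sum.inr (Sum.inl i)) ∨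
        ∃ v ∈ R, x = Sum.inl v := by
      intro x hx
      by_cases hpx : isHub x = true
      · exact Or.inl (isHub_iff.mp hpx)
      · obtain ⟨a, haS, b, hbS, hpa, hpb, hab, hax, hbx⟩ := hM x hx hpx
        obtain ⟨i1, rfl⟩ := isHub_iff.mp hpa
        obtain ⟨i2, rfl⟩ := isHub_iff.mp hpb
        match x, hpx with
        | Sum.inl v, _ =>
            refine Or.inr ⟨v, ?_, rfl⟩
            rcases hax with h | h
            · exact (adj_inl_hub G R k).mp h.symm
            · exact (adj_inl_hub G R k).mp h
        | Sum.inr (Sum.inl i), hpx => exact absurd rfl hpx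
        | Sum.inr (Sum.inr (i', j)), _ =>
            exfalso
            have h1 : i1 = i' := by
              rcases hax with h | h
              · exact (adj_hub_leaf G R k).mp h
              · exact (adj_hub_leaf G R k).mp h.symm
            have h2 : i2 = i' := by
              rcases hbx with h | h
              · exact (adj_hub_leaf G R k).mp h
              · exact (adj_hub_leaf G R k).mp h.symm
            exact hab (by rw [h1, h2])
    -- exact counts
    have hC2 := listC _ isHub hr p.support hchain
    have hlen25 : p.support.length = 2*k+1 := by omega
    -- the dominating set
    set W : Set V := {v : V | Sum.inl v ∈ p.support} with hWdef
    have hWR : W ⊆ R := by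
      intro v hv
      rcases hclass _ hv with ⟨i, h⟩ | ⟨w, hwR, h⟩
      · simp at h
      · rwa [← Sum.inl.inj h] at hwR
    have hSeq : S = (Set.range fun i : Fin (k+1) =>
        (Sum.inr (Sum.inl i) : V ⊕ (Fin (k + 1) ⊕ (Fin (k + 1) × Fin (n ^ 2))))) ∪
        (Sum.inl '' W) := by
      ext x
      constructor
      · intro hx
        rcases hclass x hx with ⟨i, rfl⟩ | ⟨w, hwR, rfl⟩
        · exact Or.inl ⟨i, rfl⟩
        · exact Or.inr ⟨w, hx, rfl⟩
      · rintro (⟨i, rfl⟩ | ⟨w, hw, rfl⟩)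
        · exact hhub i
        · exact hw
    have hWcard : W.ncard = k := by
      have hdisj : Disjoint (Set.range fun i : Fin (k+1) =>
          (Sum.inr (Sum.inl i) : V ⊕ (Fin (k + 1) ⊕ (Fin (k + 1) × Fin (n ^ 2)))))
          (Sum.inl '' W) := by
        rw [Set.disjoint_left]
        rintro x ⟨i, rfl⟩ ⟨w, -, h⟩
        simp at h
      have h1 : S.ncard = (k+1) + W.ncard := by
        rw [hSeq, Set.ncard_union_eq hdisj (Set.toFinite _) (Set.toFinite _),
          ncard_range_inj _ (fun a b h => by simpa using h), Fintype.card_fin,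
          Set.ncard_image_of_injective _ Sum.inl_injective]
      rw [hScard, hlen25] at h1
      omega
    -- every vertex outside W is in the open neighborhood
    set A : Set V := {v : V | Sum.inl v ∈ openNbhd (domRed G R k) S} with hAdef
    have hsub : openNbhd (domRed G R k) S ⊆
        (Set.range fun a : Fin (k+1) × Fin (n^2) =>
          (Sum.inr (Sum.inr a) : V ⊕ (Fin (k + 1) ⊕ (Fin (k + 1) × Fin (n ^ 2))))) ∪
        (Sum.inl '' A) := by
      rintro x hx
      match x with
      | Sum.inl v => exact Or.inr ⟨v, hx, rfl⟩
      | Sum.inr (Sum.inl i) => exact absurd (hhub i) hx.1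
      | Sum.inr (Sum.inr a) => exact Or.inl ⟨a, rfl⟩
    have hAcard : n - k ≤ A.ncard := by
      have h1 : (openNbhd (domRed G R k) S).ncard ≤ (k+1)*n^2 + A.ncard := by
        refine le_trans (Set.ncard_le_ncard hsub (Set.toFinite _)) ?_
        refine le_trans (Set.ncard_union_le _ _) ?_
        rw [ncard_range_inj _ (fun a b h => by simpa using h),
          Set.ncard_image_of_injective _ Sum.inl_injective, Fintype.card_prod,
          Fintype.card_fin, Fintype.card_fin]
      generalize (k+1)*n^2 = C at h1 hcard
      omega
    have hAW : A ⊆ Set.univ \ W := by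
      intro v hv
      exact ⟨Set.mem_univ v, fun hW => hv.1 hW⟩
    have hAeq : A = Set.univ \ W := by
      refine Set.eq_of_subset_of_ncard_le hAW ?_ (Set.toFinite _)
      rw [Set.ncard_diff (Set.subset_univ _) (Set.toFinite _), Set.ncard_univ,
        Nat.card_eq_fintype_card, hWcard]
      exact hAcard
    refine ⟨W, hWR, le_of_eq hWcard, ?_⟩
    intro b hb
    have hbW : b ∉ W := fun h =>
      Set.eq_empty_iff_forall_notMem.mp hRB b ⟨hWR h, hb⟩
    have hbA : b ∈ A := hAeq ▸ ⟨Set.mem_univ b, hbW⟩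
    obtain ⟨hbS, w', hw'S, hadj⟩ := hbA
    rcases hclass w' hw'S with ⟨i, rfl⟩ | ⟨w, hwR, rfl⟩
    · exact absurd ((adj_inl_hub G R k).mp hadj)
        (fun h => Set.eq_empty_iff_forall_notMem.mp hRB b ⟨h, hb⟩)
    · exact ⟨w, hw'S, (adj_inl_inl G R k).mp hadj⟩
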